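/- Let ℓ ≥ 3, 0 ≤ k ≤ ℓ, r ≥ 2, and assume (k,ℓ,r) ≠ (0,3,2). Then X ∈ L(A^k_ℓ(r)) is modular if and only if X lies in the lattice of the Boolean subarrangement B^k_ℓ = {H_1,...,H_k}, or X is a hyperplane of A^k_ℓ(r), or X ∈ {0, ℂ^ℓ}. -/

import Mathlib

open Submodule

/-- The intersection lattice of the arrangement `A` with ambient space `Z`:
all subspaces of the form `Z ⊓ sInf S` for `S ⊆ A` (the empty intersection gives `Z`). -/
def ArrLatIn {V : Type*} [AddCommGroup V] [Module ℂ V] (Z : Submodule ℂ V)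
    (A : Set (Submodule ℂ V)) : Set (Submodule ℂ V) :=
  {X | ∃ S ⊆ A, X = Z ⊓ sInf S}

/-- `X` is a modular element of the lattice `ℒ` (ordered by reverse inclusion):
`X ∈ ℒ` and `X + Y ∈ ℒ` for every `Y ∈ ℒ`. -/
def ModularIn {V : Type*} [AddCommGroup V] [Module ℂ V]
    (ℒ : Set (Submodule ℂ V)) (X : Submodule ℂ V) : Prop :=
  X ∈ ℒ ∧ ∀ Y ∈ ℒ, X ⊔ Y ∈ ℒ

/-- The restriction of the arrangement `A` to the subspace `Z`:
the hyperplanes `Z ∩ H` for `H ∈ A` with `Z ⊄ H`. -/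
def Restrict {V : Type*} [AddCommGroup V] [Module ℂ V]
    (A : Set (Submodule ℂ V)) (Z : Submodule ℂ V) : Set (Submodule ℂ V) :=
  {W | ∃ H ∈ A, ¬ Z ≤ H ∧ W = Z ⊓ H}

/-- A (lattice of subspaces ordered by reverse inclusion) is supersolvable if it admits a
maximal chain `C 0 > C 1 > ... > C n` (top to bottom) consisting of modular elements. -/
def LatSupersolvable {V : Type*} [AddCommGroup V] [Module ℂ V]
    (ℒ : Set (Submodule ℂ V)) : Prop :=
  ∃ n, ∃ C : Fin (n + 1) → Submodule ℂ V,
    (∀ i, ModularIn ℒ (C i)) ∧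
    (∀ W ∈ ℒ, W ≤ C 0) ∧
    (∀ W ∈ ℒ, C (Fin.last n) ≤ W) ∧
    (∀ i : Fin n, C i.succ < C i.castSucc) ∧
    (∀ i : Fin n, ∀ W ∈ ℒ, ¬(C i.succ < W ∧ W < C i.castSucc))

/-- The product of two arrangements. -/
def ProdArr {V₁ V₂ : Type*} [AddCommGroup V₁] [Module ℂ V₁] [AddCommGroup V₂] [Module ℂ V₂]
    (A₁ : Set (Submodule ℂ V₁)) (A₂ : Set (Submodule ℂ V₂)) : Set (Submodule ℂ (V₁ × V₂)) :=
  ((fun H => H.prod (⊤ : Submodule ℂ V₂)) '' A₁) ∪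
    ((fun H => (⊤ : Submodule ℂ V₁).prod H) '' A₂)

/-- The coordinate hyperplane `ker x_i` in `ℂ^ℓ`. -/
noncomputable def coordH (ℓ : ℕ) (i : Fin ℓ) : Submodule ℂ (Fin ℓ → ℂ) :=
  LinearMap.ker (LinearMap.proj i : (Fin ℓ → ℂ) →ₗ[ℂ] ℂ)

/-- The hyperplane `ker (x_i - ζ x_j)` in `ℂ^ℓ`. -/
noncomputable def diffH (ℓ : ℕ) (i j : Fin ℓ) (ζ : ℂ) : Submodule ℂ (Fin ℓ → ℂ) :=
  LinearMap.ker ((LinearMap.proj i : (Fin ℓ → ℂ) →ₗ[ℂ] ℂ) - ζ • (LinearMap.proj j))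

/-- The intermediate arrangement `A^k_ℓ(r)`: the first `k` coordinate hyperplanes together with
all hyperplanes `ker (x_i - ζ x_j)` for `i < j` and `ζ` an `r`-th root of unity. -/
def interArr (r ℓ k : ℕ) : Set (Submodule ℂ (Fin ℓ → ℂ)) :=
  {H | ∃ i : Fin ℓ, (i : ℕ) < k ∧ H = coordH ℓ i} ∪
    {H | ∃ i j : Fin ℓ, i < j ∧ ∃ ζ : ℂ, ζ ^ r = 1 ∧ H = diffH ℓ i j ζ}

/-- The Boolean subarrangement `B^k_ℓ` of the first `k` coordinate hyperplanes of `ℂ^ℓ`. -/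
def boolArr (ℓ k : ℕ) : Set (Submodule ℂ (Fin ℓ → ℂ)) :=
  {H | ∃ i : Fin ℓ, (i : ℕ) < k ∧ H = coordH ℓ i}

/-- The degree-one polynomial corresponding to a linear form on `ℂ^n`. -/
noncomputable def linPoly {n : ℕ} (f : (Fin n → ℂ) →ₗ[ℂ] ℂ) : MvPolynomial (Fin n) ℂ :=
  ∑ i, MvPolynomial.C (f (Pi.single i 1)) * MvPolynomial.X i

/-- The module of derivations `D(Q) = {θ | θ(Q) ∈ Q·S}` is free with a homogeneous basis
`θ 0, ..., θ (n-1)` of polynomial degrees `e 0, ..., e (n-1)`. -/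
def IsFreeWithExponents (n : ℕ) (Q : MvPolynomial (Fin n) ℂ) (e : Fin n → ℕ) : Prop :=
  ∃ θ : Fin n → Derivation ℂ (MvPolynomial (Fin n) ℂ) (MvPolynomial (Fin n) ℂ),
    (∀ i, θ i Q ∈ Ideal.span {Q}) ∧
    (∀ i j, ((θ i) (MvPolynomial.X j)).IsHomogeneous (e i)) ∧
    (∀ c : Fin n → MvPolynomial (Fin n) ℂ, (∑ i, c i • θ i) = 0 → ∀ i, c i = 0) ∧
    (∀ η : Derivation ℂ (MvPolynomial (Fin n) ℂ) (MvPolynomial (Fin n) ℂ),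
      η Q ∈ Ideal.span {Q} →
      ∃ c : Fin n → MvPolynomial (Fin n) ℂ, η = ∑ i, c i • θ i)

/-- An arrangement is irreducible if it is not a product of two nonempty arrangements, i.e.
there is no nontrivial direct sum decomposition of the ambient space such that every
hyperplane contains one of the two summands. -/
def IsIrreducibleArr {V : Type*} [AddCommGroup V] [Module ℂ V]
    (A : Set (Submodule ℂ V)) : Prop :=
  ¬ ∃ V₁ V₂ : Submodule ℂ V, V₁ ≠ ⊥ ∧ V₂ ≠ ⊥ ∧ V₁ ⊓ V₂ = ⊥ ∧ V₁ ⊔ V₂ = ⊤ ∧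
      ∀ H ∈ A, V₁ ≤ H ∨ V₂ ≤ H

/-- The restriction of `A` to the hyperplane `H` is linearly isomorphic to the intermediate
arrangement `A^{k'}_{ℓ'}(r)`. -/
def RestrEquiv (r ℓ : ℕ) (A : Set (Submodule ℂ (Fin ℓ → ℂ))) (H : Submodule ℂ (Fin ℓ → ℂ))
    (ℓ' k' : ℕ) : Prop :=
  ∃ φ : (Fin ℓ' → ℂ) →ₗ[ℂ] (Fin ℓ → ℂ), Function.Injective φ ∧ LinearMap.range φ = H ∧
    Restrict A H = (fun K => Submodule.map φ K) '' interArr r ℓ' k'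

section Helpers

variable {r ℓ k : ℕ}

lemma mem_coordH {ℓ : ℕ} {i : Fin ℓ} {x : Fin ℓ → ℂ} : x ∈ coordH ℓ i ↔ x i = 0 := by
  simp [coordH, LinearMap.mem_ker]

lemma mem_diffH {ℓ : ℕ} {i j : Fin ℓ} {ζ : ℂ} {x : Fin ℓ → ℂ} :
    x ∈ diffH ℓ i j ζ ↔ x i = ζ * x j := by
  simp [diffH, LinearMap.mem_ker, sub_eq_zero]

lemma root_ne_zero {r : ℕ} (hr : 2 ≤ r) {ζ : ℂ} (h : ζ ^ r = 1) : ζ ≠ 0 := by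
  intro h0
  rw [h0, zero_pow (by omega)] at h
  exact zero_ne_one h

lemma root_inv {r : ℕ} {ζ : ℂ} (h : ζ ^ r = 1) : (ζ⁻¹) ^ r = 1 := by
  rw [inv_pow, h, inv_one]

lemma root_mul {r : ℕ} {ζ η : ℂ} (h : ζ ^ r = 1) (h' : η ^ r = 1) : (ζ * η) ^ r = 1 := by
  rw [mul_pow, h, h', one_mul]

/-- A fixed `r`-th root of unity different from `1`. -/
noncomputable def zeta0 (r : ℕ) : ℂ := Complex.exp (2 * Real.pi * Complex.I / r)

lemma zeta0_pow {r : ℕ} (hr : 2 ≤ r) : (zeta0 r) ^ r = 1 :=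
  (Complex.isPrimitiveRoot_exp r (by omega)).pow_eq_one

lemma zeta0_ne_one {r : ℕ} (hr : 2 ≤ r) : zeta0 r ≠ 1 :=
  (Complex.isPrimitiveRoot_exp r (by omega)).ne_one (by omega)

lemma zeta0_ne_zero {r : ℕ} (hr : 2 ≤ r) : zeta0 r ≠ 0 :=
  root_ne_zero hr (zeta0_pow hr)

/-- canonical description of a lattice element pointwise -/
lemma decomp {r ℓ k : ℕ} (hr : 2 ≤ r) {Y : Submodule ℂ (Fin ℓ → ℂ)}
    (hY : Y ∈ ArrLatIn ⊤ (interArr r ℓ k)) (v : Fin ℓ → ℂ)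
    (h0 : ∀ s, Y ≤ coordH ℓ s → v s = 0)
    (hrel : ∀ s s' : Fin ℓ, ∀ ζ : ℂ, ζ ^ r = 1 → ¬ Y ≤ coordH ℓ s → ¬ Y ≤ coordH ℓ s' →
      Y ≤ diffH ℓ s s' ζ → v s = ζ * v s') :
    v ∈ Y := by
  obtain ⟨S, hS, hYeq⟩ := hY
  rw [top_inf_eq] at hYeq
  have hle : ∀ H ∈ S, Y ≤ H := fun H hH => hYeq ▸ sInf_le hH
  rw [hYeq, Submodule.mem_sInf]
  intro H hH
  obtain ⟨i, hik, rfl⟩ | ⟨i, j, hij, ζ, hζ, rfl⟩ := hS hH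
  · exact mem_coordH.2 (h0 i (hle _ hH))
  · have hζ0 : ζ ≠ 0 := root_ne_zero hr hζ
    by_cases hi : Y ≤ coordH ℓ i
    · have hj : Y ≤ coordH ℓ j := by
        intro x hx
        have h1 := mem_coordH.1 (hi hx)
        have h2 := mem_diffH.1 (hle _ hH hx)
        exact mem_coordH.2 (by rw [h1] at h2; exact (mul_eq_zero.1 h2.symm).resolve_left hζ0)
      rw [mem_diffH, h0 i hi, h0 j hj, mul_zero]
    · have hj : ¬ Y ≤ coordH ℓ j := by
        intro hj
        exact hi (fun x hx => mem_coordH.2 (by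
          rw [mem_diffH.1 (hle _ hH hx), mem_coordH.1 (hj hx), mul_zero]))
      exact mem_diffH.2 (hrel i j ζ hζ hi hj (hle _ hH))

end Helpers

section Helpers2

variable {r ℓ k : ℕ} {X Y : Submodule ℂ (Fin ℓ → ℂ)} {i j m : Fin ℓ} {ζ η ν : ℂ}

lemma mem_interArr {H : Submodule ℂ (Fin ℓ → ℂ)} :
    H ∈ interArr r ℓ k ↔ (∃ i : Fin ℓ, (i : ℕ) < k ∧ H = coordH ℓ i) ∨
      (∃ i j : Fin ℓ, i < j ∧ ∃ ζ : ℂ, ζ ^ r = 1 ∧ H = diffH ℓ i j ζ) := Iff.rfl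

lemma diffH_flip_eq (hζ : ζ ≠ 0) : diffH ℓ i j ζ = diffH ℓ j i ζ⁻¹ := by
  ext x
  rw [mem_diffH, mem_diffH]
  constructor
  · intro h; rw [h]; field_simp
  · intro h; rw [h]; field_simp

lemma diffH_mem_arr (hij : i ≠ j) (hζ : ζ ^ r = 1) (hr : 2 ≤ r) :
    diffH ℓ i j ζ ∈ interArr r ℓ k := by
  rcases lt_or_gt_of_ne hij with h | h
  · exact Or.inr ⟨i, j, h, ζ, hζ, rfl⟩
  · exact Or.inr ⟨j, i, h, ζ⁻¹, root_inv hζ, diffH_flip_eq (root_ne_zero hr hζ)⟩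

lemma le_diffH_flip (hζ : ζ ≠ 0) (h : X ≤ diffH ℓ i j ζ) : X ≤ diffH ℓ j i ζ⁻¹ :=
  (diffH_flip_eq hζ) ▸ h

lemma le_diffH_trans (h1 : X ≤ diffH ℓ i j ζ) (h2 : X ≤ diffH ℓ j m η) :
    X ≤ diffH ℓ i m (ζ * η) := by
  intro x hx
  rw [mem_diffH] at *
  rw [mem_diffH.1 (h1 hx), mem_diffH.1 (h2 hx), mul_assoc]

lemma exists_ne_zero_coord (h : ¬ X ≤ coordH ℓ j) : ∃ x ∈ X, x j ≠ 0 := by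
  obtain ⟨x, hxX, hx⟩ := SetLike.not_le_iff_exists.1 h
  exact ⟨x, hxX, fun h0 => hx (mem_coordH.2 h0)⟩

lemma rel_uniq (h1 : X ≤ diffH ℓ i j ζ) (h2 : X ≤ diffH ℓ i j ν)
    (hj : ¬ X ≤ coordH ℓ j) : ζ = ν := by
  obtain ⟨x, hxX, hx⟩ := exists_ne_zero_coord hj
  have e1 := mem_diffH.1 (h1 hxX)
  have e2 := mem_diffH.1 (h2 hxX)
  exact mul_right_cancel₀ hx (e1 ▸ e2 ▸ rfl)

lemma rel_zero (h1 : X ≤ diffH ℓ i j ζ) (hj : X ≤ coordH ℓ j) : X ≤ coordH ℓ i := by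
  intro x hx
  rw [mem_coordH, mem_diffH.1 (h1 hx), mem_coordH.1 (hj hx), mul_zero]

lemma rel_zero' (hr : 2 ≤ r) (hζ : ζ ^ r = 1) (h1 : X ≤ diffH ℓ i j ζ)
    (hi : X ≤ coordH ℓ i) : X ≤ coordH ℓ j := by
  have := le_diffH_flip (root_ne_zero hr hζ) h1
  exact rel_zero this hi

/-- The key non-modularity criterion. -/
lemma nonmod {K : Submodule ℂ (Fin ℓ → ℂ)}
    (hcom : ∀ H ∈ interArr r ℓ k, X ≤ H → Y ≤ H → False)
    (hXK : X ≤ K) (hYK : Y ≤ K) (hK : K ≠ ⊤) :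
    X ⊔ Y ∉ ArrLatIn ⊤ (interArr r ℓ k) := by
  rintro ⟨S, hS, hEq⟩
  rw [top_inf_eq] at hEq
  have hempty : S = ∅ := by
    rw [Set.eq_empty_iff_forall_notMem]
    intro H hH
    have hle : X ⊔ Y ≤ H := hEq ▸ sInf_le hH
    exact hcom H (hS hH) (le_trans le_sup_left hle) (le_trans le_sup_right hle)
  rw [hempty, sInf_empty] at hEq
  exact hK (top_unique (hEq ▸ sup_le hXK hYK : (⊤ : Submodule ℂ (Fin ℓ → ℂ)) ≤ K))

end Helpers2

section Helpers3

variable {r ℓ k : ℕ}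

lemma top_mem_lat {A : Set (Submodule ℂ (Fin ℓ → ℂ))} : ⊤ ∈ ArrLatIn ⊤ A :=
  ⟨∅, Set.empty_subset _, by simp⟩

lemma hyper_mem_lat {A : Set (Submodule ℂ (Fin ℓ → ℂ))} {H : Submodule ℂ (Fin ℓ → ℂ)}
    (hH : H ∈ A) : H ∈ ArrLatIn ⊤ A :=
  ⟨{H}, by simpa using hH, by simp⟩

lemma inf_two_mem_lat {A : Set (Submodule ℂ (Fin ℓ → ℂ))} {H₁ H₂ : Submodule ℂ (Fin ℓ → ℂ)}
    (h1 : H₁ ∈ A) (h2 : H₂ ∈ A) : H₁ ⊓ H₂ ∈ ArrLatIn ⊤ A := by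
  refine ⟨{H₁, H₂}, ?_, by simp⟩
  intro H hH
  rcases hH with h | h <;> simp_all

lemma inf_three_mem_lat {A : Set (Submodule ℂ (Fin ℓ → ℂ))} {H₁ H₂ H₃ : Submodule ℂ (Fin ℓ → ℂ)}
    (h1 : H₁ ∈ A) (h2 : H₂ ∈ A) (h3 : H₃ ∈ A) : H₁ ⊓ H₂ ⊓ H₃ ∈ ArrLatIn ⊤ A := by
  refine ⟨{H₁, H₂, H₃}, ?_, ?_⟩
  · intro H hH
    rcases hH with h | h | h <;> simp_all
  · rw [sInf_insert, sInf_insert, sInf_singleton, top_inf_eq, inf_assoc]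

lemma bot_mem_lat (hr : 2 ≤ r) (hℓ : 3 ≤ ℓ) : ⊥ ∈ ArrLatIn ⊤ (interArr r ℓ k) := by
  refine ⟨{H | ∃ i j : Fin ℓ, i < j ∧ ∃ ζ : ℂ, ζ ^ r = 1 ∧ H = diffH ℓ i j ζ}, fun H hH => Or.inr hH, ?_⟩
  rw [top_inf_eq]
  refine le_antisymm bot_le ?_
  intro v hv
  rw [Submodule.mem_sInf] at hv
  have h0 : (0:ℕ) < ℓ := by omega
  have h1' : (1:ℕ) < ℓ := by omega
  have key : ∀ s : Fin ℓ, s ≠ ⟨0, h0⟩ → v s = 0 := by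
    intro s hs
    have hlt : (⟨0, h0⟩ : Fin ℓ) < s := by
      rw [Fin.lt_def]
      exact Nat.pos_of_ne_zero (fun h => hs (Fin.ext h))
    have h1 := mem_diffH.1 (hv _ ⟨_, s, hlt, 1, one_pow r, rfl⟩)
    have h2 := mem_diffH.1 (hv _ ⟨_, s, hlt, zeta0 r, zeta0_pow hr, rfl⟩)
    have h3 : (1 - zeta0 r) * v s = 0 := by linear_combination h1.symm.trans h2
    rcases mul_eq_zero.1 h3 with h | h
    · exact absurd (by linear_combination -h : zeta0 r = 1) (zeta0_ne_one hr)
    · exact h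
  rw [Submodule.mem_bot]
  funext s
  by_cases hs : s = ⟨0, h0⟩
  · rw [hs]
    have hlt : (⟨0, h0⟩ : Fin ℓ) < ⟨1, h1'⟩ := by rw [Fin.lt_def]; exact Nat.zero_lt_one
    have h1 := mem_diffH.1 (hv _ ⟨_, _, hlt, 1, one_pow r, rfl⟩)
    have h2 : v ⟨1, h1'⟩ = 0 := key _ (by simp [Fin.ext_iff])
    simp only [Pi.zero_apply]
    rw [h1, h2, mul_zero]
  · exact (key s hs).trans rfl

lemma modular_top : ModularIn (ArrLatIn ⊤ (interArr r ℓ k)) ⊤ :=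
  ⟨top_mem_lat, fun Y _ => by rw [top_sup_eq]; exact top_mem_lat⟩

lemma modular_bot (hr : 2 ≤ r) (hℓ : 3 ≤ ℓ) : ModularIn (ArrLatIn ⊤ (interArr r ℓ k)) ⊥ :=
  ⟨bot_mem_lat hr hℓ, fun Y hY => by rwa [bot_sup_eq]⟩

lemma modular_hyper (hr : 2 ≤ r) {H : Submodule ℂ (Fin ℓ → ℂ)} (hH : H ∈ interArr r ℓ k) :
    ModularIn (ArrLatIn ⊤ (interArr r ℓ k)) H := by
  refine ⟨hyper_mem_lat hH, fun Y hY => ?_⟩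
  have hcoatom : IsCoatom H := by
    obtain ⟨i, hik, rfl⟩ | ⟨i, j, hij, ζ, hζ, rfl⟩ := hH
    · apply LinearMap.isCoatom_ker_of_surjective
      intro c
      refine ⟨c • (Pi.single i 1 : Fin ℓ → ℂ), by simp⟩
    · apply LinearMap.isCoatom_ker_of_surjective
      intro c
      refine ⟨c • (Pi.single i 1 : Fin ℓ → ℂ), ?_⟩
      have hne : j ≠ i := (Fin.ne_of_lt hij).symm
      simp [Pi.single_apply, hne]
  by_cases hYH : Y ≤ H
  · rw [sup_eq_left.2 hYH]
    exact hyper_mem_lat hH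
  · have hlt : H < H ⊔ Y := lt_of_le_of_ne le_sup_left (by
      intro h
      exact hYH (left_eq_sup.1 h))
    rw [hcoatom.2 _ hlt]
    exact top_mem_lat
end Helpers3

section Helpers4

variable {r ℓ k : ℕ}

lemma modular_bool (hr : 2 ≤ r) {S₀ : Set (Submodule ℂ (Fin ℓ → ℂ))} (hS₀ : S₀ ⊆ boolArr ℓ k) :
    ModularIn (ArrLatIn ⊤ (interArr r ℓ k)) (⊤ ⊓ sInf S₀) := by
  classical
  set X : Submodule ℂ (Fin ℓ → ℂ) := ⊤ ⊓ sInf S₀ with hXdef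
  have hXmem : X ∈ ArrLatIn ⊤ (interArr r ℓ k) := ⟨S₀, fun H h => Or.inl (hS₀ h), rfl⟩
  refine ⟨hXmem, fun Y hY => ?_⟩
  have hXt : ∀ {t : Fin ℓ}, coordH ℓ t ∈ S₀ → X ≤ coordH ℓ t :=
    fun h => inf_le_right.trans (sInf_le h)
  refine ⟨{H | H ∈ interArr r ℓ k ∧ X ⊔ Y ≤ H}, fun H h => h.1, ?_⟩
  rw [top_inf_eq]
  refine le_antisymm (le_sInf fun H h => h.2) ?_
  intro v hv
  rw [Submodule.mem_sInf] at hv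
  -- consistency of v on connected T-indices
  have vconsist : ∀ (s t₁ t₂ : Fin ℓ) (ζ₁ ζ₂ : ℂ), coordH ℓ t₁ ∈ S₀ → coordH ℓ t₂ ∈ S₀ →
      ζ₁ ^ r = 1 → ζ₂ ^ r = 1 → ¬ Y ≤ coordH ℓ s →
      Y ≤ diffH ℓ s t₁ ζ₁ → Y ≤ diffH ℓ s t₂ ζ₂ → ζ₁ * v t₁ = ζ₂ * v t₂ := by
    intro s t₁ t₂ ζ₁ ζ₂ ht₁ ht₂ hζ₁ hζ₂ hs h₁ h₂
    by_cases hteq : t₁ = t₂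
    · subst hteq
      have ht₁Z : ¬ Y ≤ coordH ℓ t₁ := fun h => hs (rel_zero h₁ h)
      rw [rel_uniq h₁ h₂ ht₁Z]
    · have hY12 : Y ≤ diffH ℓ t₁ t₂ (ζ₁⁻¹ * ζ₂) :=
        le_diffH_trans (le_diffH_flip (root_ne_zero hr hζ₁) h₁) h₂
      have hX12 : X ≤ diffH ℓ t₁ t₂ (ζ₁⁻¹ * ζ₂) := by
        intro x hx
        rw [mem_diffH, mem_coordH.1 (hXt ht₁ hx), mem_coordH.1 (hXt ht₂ hx), mul_zero]
      have hmem : diffH ℓ t₁ t₂ (ζ₁⁻¹ * ζ₂) ∈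
          {H | H ∈ interArr r ℓ k ∧ X ⊔ Y ≤ H} :=
        ⟨diffH_mem_arr hteq (root_mul (root_inv hζ₁) hζ₂) hr, sup_le hX12 hY12⟩
      have hveq := mem_diffH.1 (hv _ hmem)
      have hζ₁0 : ζ₁ ≠ 0 := root_ne_zero hr hζ₁
      rw [hveq]
      field_simp
  -- the decomposition vector y
  let P : Fin ℓ → Prop := fun s => ∃ t ζ, coordH ℓ t ∈ S₀ ∧ ζ ^ r = 1 ∧
      (¬ Y ≤ coordH ℓ s) ∧ Y ≤ diffH ℓ s t ζ
  let y : Fin ℓ → ℂ := fun s => if h : P s then h.choose_spec.choose * v h.choose else 0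
  have hy_pos : ∀ {s} (h : P s), y s = h.choose_spec.choose * v h.choose := by
    intro s h; simp only [y, dif_pos h]
  have hy_neg : ∀ {s}, ¬ P s → y s = 0 := by
    intro s h; simp only [y, dif_neg h]
  have hyY : y ∈ Y := by
    apply decomp hr hY
    · intro s hs
      exact hy_neg (fun h => h.choose_spec.choose_spec.2.2.1 hs)
    · intro s s' ζ hζ hs hs' hss'
      by_cases hc' : P s'
      · have hc : P s := ⟨hc'.choose, ζ * hc'.choose_spec.choose,
          hc'.choose_spec.choose_spec.1, root_mul hζ hc'.choose_spec.choose_spec.2.1, hs,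
          le_diffH_trans hss' hc'.choose_spec.choose_spec.2.2.2⟩
        rw [hy_pos hc, hy_pos hc']
        have := vconsist s hc.choose hc'.choose hc.choose_spec.choose
          (ζ * hc'.choose_spec.choose)
          hc.choose_spec.choose_spec.1 hc'.choose_spec.choose_spec.1
          hc.choose_spec.choose_spec.2.1
          (root_mul hζ hc'.choose_spec.choose_spec.2.1) hs
          hc.choose_spec.choose_spec.2.2.2
          (le_diffH_trans hss' hc'.choose_spec.choose_spec.2.2.2)
        rw [this]; ring
      · have hc : ¬ P s := by
          intro hc
          exact hc' ⟨hc.choose, ζ⁻¹ * hc.choose_spec.choose, hc.choose_spec.choose_spec.1,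
            root_mul (root_inv hζ) hc.choose_spec.choose_spec.2.1, hs',
            le_diffH_trans (le_diffH_flip (root_ne_zero hr hζ) hss')
              hc.choose_spec.choose_spec.2.2.2⟩
        rw [hy_neg hc, hy_neg hc', mul_zero]
  have hvyX : v - y ∈ X := by
    refine Submodule.mem_inf.2 ⟨trivial, ?_⟩
    rw [Submodule.mem_sInf]
    intro H hH
    obtain ⟨t, htk, rfl⟩ := hS₀ hH
    rw [mem_coordH]
    show v t - y t = 0
    rw [sub_eq_zero]
    by_cases hZt : Y ≤ coordH ℓ t
    · have hyt : y t = 0 := hy_neg (fun h => h.choose_spec.choose_spec.2.2.1 hZt)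
      have hvt : v t = 0 := by
        have hmem : coordH ℓ t ∈ {H | H ∈ interArr r ℓ k ∧ X ⊔ Y ≤ H} :=
          ⟨Or.inl ⟨t, htk, rfl⟩, sup_le (hXt hH) hZt⟩
        exact mem_coordH.1 (hv _ hmem)
      rw [hvt, hyt]
    · have hc : P t := ⟨t, 1, hH, one_pow r, hZt,
        fun x _ => mem_diffH.2 (one_mul (x t)).symm⟩
      rw [hy_pos hc]
      have := vconsist t t hc.choose 1 hc.choose_spec.choose hH
        hc.choose_spec.choose_spec.1 (one_pow r) hc.choose_spec.choose_spec.2.1 hZt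
        (fun x _ => mem_diffH.2 (one_mul (x t)).symm)
        hc.choose_spec.choose_spec.2.2.2
      rw [← this, one_mul]
  have : (v - y) + y ∈ X ⊔ Y :=
    Submodule.add_mem_sup hvyX hyY
  rwa [sub_add_cancel] at this

end Helpers4

section Helpers5

variable {r ℓ k : ℕ} {X Y : Submodule ℂ (Fin ℓ → ℂ)} {a b s : Fin ℓ} {ζ ν c : ℂ}

lemma rel_self (h : X ≤ diffH ℓ s s c) (hs : ¬X ≤ coordH ℓ s) : c = 1 := by
  obtain ⟨x, hxX, hx⟩ := exists_ne_zero_coord hs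
  have h1 := mem_diffH.1 (h hxX)
  have h2 : 1 * x s = c * x s := by rw [one_mul]; exact h1
  exact (mul_right_cancel₀ hx h2).symm

lemma single_mem_diffH (hwa : a ≠ s) (hwb : b ≠ s) :
    Pi.single s (1:ℂ) ∈ diffH ℓ a b ν := by
  rw [mem_diffH]
  simp [Pi.single_apply, hwa, hwb]

lemma single_not_mem_diffH_left (hab : a ≠ b) (hν : ν ^ r = 1) (hr : 2 ≤ r) :
    Pi.single a (1:ℂ) ∉ diffH ℓ a b ν := by
  rw [mem_diffH]
  simp [Pi.single_apply, hab.symm, Ne.symm hab]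

lemma single_not_mem_diffH_right (hab : a ≠ b) (hν : ν ^ r = 1) (hr : 2 ≤ r) :
    Pi.single b (1:ℂ) ∉ diffH ℓ a b ν := by
  rw [mem_diffH]
  simp [Pi.single_apply, hab, Ne.symm hab]
  exact Ne.symm (root_ne_zero hr hν)

lemma single_not_mem_coordH : Pi.single a (1:ℂ) ∉ coordH ℓ a := by
  rw [mem_coordH]; simp

lemma ne_top_of_notmem {K : Submodule ℂ (Fin ℓ → ℂ)} {x : Fin ℓ → ℂ} (h : x ∉ K) : K ≠ ⊤ :=
  fun ht => h (ht.symm ▸ Submodule.mem_top)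

noncomputable def lin4 {ℓ : ℕ} (c₁ c₂ c₃ c₄ : ℂ) (p₁ p₂ p₃ p₄ : Fin ℓ) :
    (Fin ℓ → ℂ) →ₗ[ℂ] ℂ :=
  c₁ • (LinearMap.proj p₁ : (Fin ℓ → ℂ) →ₗ[ℂ] ℂ) + c₂ • LinearMap.proj p₂ +
    c₃ • LinearMap.proj p₃ + c₄ • LinearMap.proj p₄

lemma mem_ker_lin4 {c₁ c₂ c₃ c₄ : ℂ} {p₁ p₂ p₃ p₄ : Fin ℓ} {x : Fin ℓ → ℂ} :
    x ∈ LinearMap.ker (lin4 c₁ c₂ c₃ c₄ p₁ p₂ p₃ p₄) ↔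
      c₁ * x p₁ + c₂ * x p₂ + c₃ * x p₃ + c₄ * x p₄ = 0 := by
  simp [lin4, LinearMap.mem_ker]

end Helpers5

section Forward1

variable {r ℓ k : ℕ}

lemma caseI3 (hr : 2 ≤ r) {X : Submodule ℂ (Fin ℓ → ℂ)}
    (hmod : ModularIn (ArrLatIn ⊤ (interArr r ℓ k)) X)
    {j m : Fin ℓ} (hjk : k ≤ (j : ℕ)) (hPj : X ≤ coordH ℓ j)
    (hPm : ¬ X ≤ coordH ℓ m) : False := by
  have hjm : j ≠ m := fun h => hPm (h ▸ hPj)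
  set Y := diffH ℓ j m 1 ⊓ diffH ℓ j m (zeta0 r) with hYdef
  have hYlat : Y ∈ ArrLatIn ⊤ (interArr r ℓ k) :=
    inf_two_mem_lat (diffH_mem_arr hjm (one_pow r) hr) (diffH_mem_arr hjm (zeta0_pow hr) hr)
  have hYchar : ∀ x ∈ Y, x j = 0 ∧ x m = 0 := by
    intro x hx
    obtain ⟨h1, h2⟩ := Submodule.mem_inf.1 hx
    rw [mem_diffH] at h1 h2
    have h3 : (1 - zeta0 r) * x m = 0 := by linear_combination h2 - h1
    have hm0 : x m = 0 := by
      rcases mul_eq_zero.1 h3 with h | h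
      · exact absurd (by linear_combination -h : zeta0 r = 1) (zeta0_ne_one hr)
      · exact h
    exact ⟨by rw [h1, hm0, mul_zero], hm0⟩
  have hmemY : ∀ w : Fin ℓ, j ≠ w → m ≠ w → Pi.single w (1:ℂ) ∈ Y :=
    fun w h1 h2 => Submodule.mem_inf.2 ⟨single_mem_diffH h1 h2, single_mem_diffH h1 h2⟩
  have hcom : ∀ H ∈ interArr r ℓ k, X ≤ H → Y ≤ H → False := by
    intro H hH hXH hYH
    obtain ⟨c, hck, rfl⟩ | ⟨a, b, hab, ν, hν, rfl⟩ := hH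
    · by_cases hcj : c = j
      · subst hcj; omega
      by_cases hcm : c = m
      · subst hcm; exact hPm hXH
      · exact single_not_mem_coordH (hYH (hmemY c (Ne.symm hcj) (Ne.symm hcm)))
    · have hab' : a ≠ b := Fin.ne_of_lt hab
      have ha : a = j ∨ a = m := by
        by_contra h; push_neg at h
        exact single_not_mem_diffH_left hab' hν hr (hYH (hmemY a (Ne.symm h.1) (Ne.symm h.2)))
      have hb : b = j ∨ b = m := by
        by_contra h; push_neg at h
        exact single_not_mem_diffH_right hab' hν hr (hYH (hmemY b (Ne.symm h.1) (Ne.symm h.2)))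
      obtain ⟨x, hxX, hxm⟩ := exists_ne_zero_coord hPm
      have hxj : x j = 0 := mem_coordH.1 (hPj hxX)
      rcases ha with rfl | rfl <;> rcases hb with rfl | rfl
      · exact hab' rfl
      · have := mem_diffH.1 (hXH hxX)
        rw [hxj] at this
        rcases mul_eq_zero.1 this.symm with h | h
        · exact root_ne_zero hr hν h
        · exact hxm h
      · have := mem_diffH.1 (hXH hxX)
        rw [hxj, mul_zero] at this
        exact hxm this
      · exact hab' rfl
  exact nonmod hcom hPj (fun x hx => mem_coordH.2 (hYchar x hx).1)
    (ne_top_of_notmem single_not_mem_coordH) (hmod.2 Y hYlat)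

lemma caseIIa (hr : 2 ≤ r) {X : Submodule ℂ (Fin ℓ → ℂ)}
    (hmod : ModularIn (ArrLatIn ⊤ (interArr r ℓ k)) X)
    {i j t : Fin ℓ} {ζ : ℂ} (hij : i ≠ j) (hζ : ζ ^ r = 1)
    (hPi : ¬ X ≤ coordH ℓ i) (hPj : ¬ X ≤ coordH ℓ j)
    (hXij : X ≤ diffH ℓ i j ζ) (hPt : X ≤ coordH ℓ t) : False := by
  have hti : t ≠ i := fun h => hPi (h ▸ hPt)
  have htj : t ≠ j := fun h => hPj (h ▸ hPt)
  have hζ0 : ζ ≠ 0 := root_ne_zero hr hζ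
  set ζ' : ℂ := zeta0 r * ζ with hζ'def
  have hζ' : ζ' ^ r = 1 := root_mul (zeta0_pow hr) hζ
  have hζ'0 : ζ' ≠ 0 := root_ne_zero hr hζ'
  have hζ'ζ : ζ' ≠ ζ := by
    intro h
    exact zeta0_ne_one hr (by rw [hζ'def] at h; exact mul_right_cancel₀ hζ0 (h.trans (one_mul ζ).symm))
  set Y := diffH ℓ i j ζ' ⊓ diffH ℓ i t 1 with hYdef
  have hYlat : Y ∈ ArrLatIn ⊤ (interArr r ℓ k) :=
    inf_two_mem_lat (diffH_mem_arr hij hζ' hr) (diffH_mem_arr (Ne.symm hti) (one_pow r) hr)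
  -- test vector
  set v : Fin ℓ → ℂ := fun s => if s = i then ζ' else if s = j then 1 else if s = t then ζ' else 0 with hvdef
  have hv_i : v i = ζ' := by simp [hvdef]
  have hv_j : v j = 1 := by simp [hvdef, Ne.symm hij]
  have hv_t : v t = ζ' := by simp [hvdef, hti, htj]
  have hvY : v ∈ Y := by
    refine Submodule.mem_inf.2 ⟨mem_diffH.2 ?_, mem_diffH.2 ?_⟩
    · rw [hv_i, hv_j, mul_one]
    · rw [hv_i, hv_t, one_mul]
  have hmemY : ∀ w : Fin ℓ, i ≠ w → j ≠ w → t ≠ w → Pi.single w (1:ℂ) ∈ Y :=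
    fun w h1 h2 h3 => Submodule.mem_inf.2 ⟨single_mem_diffH h1 h2, single_mem_diffH h1 h3⟩
  -- K
  set K := LinearMap.ker (lin4 ζ' (-(ζ*ζ')) (-(ζ'-ζ)) 0 i j t t) with hKdef
  have hXK : X ≤ K := by
    intro x hx
    have e1 := mem_diffH.1 (hXij hx)
    have e2 := mem_coordH.1 (hPt hx)
    rw [hKdef, mem_ker_lin4]
    linear_combination ζ' * e1 - (ζ' - ζ) * e2
  have hYK : Y ≤ K := by
    intro x hx
    obtain ⟨h1, h2⟩ := Submodule.mem_inf.1 hx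
    rw [mem_diffH] at h1 h2
    rw [hKdef, mem_ker_lin4]
    linear_combination ζ * h1 + (ζ' - ζ) * h2
  have hKne : K ≠ ⊤ := by
    apply ne_top_of_notmem (x := Pi.single j 1)
    rw [hKdef, mem_ker_lin4]
    simp [Pi.single_apply, hij.symm, htj.symm]
    exact ⟨hζ0, hζ'0⟩
  have hcom : ∀ H ∈ interArr r ℓ k, X ≤ H → Y ≤ H → False := by
    intro H hH hXH hYH
    obtain ⟨c, hck, rfl⟩ | ⟨a, b, hab, ν, hν, rfl⟩ := hH
    · by_cases hci : c = i
      · subst hci; exact hPi hXH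
      by_cases hcj : c = j
      · subst hcj; exact hPj hXH
      by_cases hct : c = t
      · subst hct
        have hvt := mem_coordH.1 (hYH hvY)
        rw [hv_t] at hvt
        exact hζ'0 hvt
      · exact single_not_mem_coordH (hYH (hmemY c (Ne.symm hci) (Ne.symm hcj) (Ne.symm hct)))
    · have hab' : a ≠ b := Fin.ne_of_lt hab
      have hν0 : ν ≠ 0 := root_ne_zero hr hν
      have ha : a = i ∨ a = j ∨ a = t := by
        by_contra h; push_neg at h
        exact single_not_mem_diffH_left hab' hν hr
          (hYH (hmemY a (Ne.symm h.1) (Ne.symm h.2.1) (Ne.symm h.2.2)))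
      have hb : b = i ∨ b = j ∨ b = t := by
        by_contra h; push_neg at h
        exact single_not_mem_diffH_right hab' hν hr
          (hYH (hmemY b (Ne.symm h.1) (Ne.symm h.2.1) (Ne.symm h.2.2)))
      have hvrel := mem_diffH.1 (hYH hvY)
      rcases ha with rfl | rfl | rfl <;> rcases hb with rfl | rfl | rfl
      · exact hab' rfl
      · -- (i,j): ν = ζ' from v, then ζ = ζ'
        rw [hv_i, hv_j, mul_one] at hvrel
        rw [← hvrel] at hXH
        exact hζ'ζ (rel_uniq hXH hXij hPj)
      · -- (i,t): X ≤ diffH i t ν with X ≤ coordH t ⟹ X ≤ coordH i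
        exact hPi (rel_zero hXH hPt)
      · -- (j,i): compose X ≤ diffH j i ν with hXij : diffH i j ζ gives diffH j j (ν ζ)
        have hself := le_diffH_trans hXH hXij
        have hνζ : ν * ζ = 1 := rel_self hself hPj
        rw [hv_j, hv_i] at hvrel
        -- hvrel : 1 = ν * ζ'
        exact hζ'ζ (mul_left_cancel₀ hν0 (hνζ.trans hvrel)).symm
      · exact hab' rfl
      · exact hPj (rel_zero hXH hPt)
      · exact hPi (rel_zero' hr hν hXH hPt)
      · exact hPj (rel_zero' hr hν hXH hPt)
      · exact hab' rfl
  exact nonmod hcom hXK hYK hKne (hmod.2 Y hYlat)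

end Forward1

section Forward2

variable {r ℓ k : ℕ}

lemma caseIIc_core (hr : 2 ≤ r) {X : Submodule ℂ (Fin ℓ → ℂ)}
    (hmod : ModularIn (ArrLatIn ⊤ (interArr r ℓ k)) X)
    {i j a b : Fin ℓ} {ζ lam c : ℂ}
    (hij : i ≠ j) (hab : a ≠ b) (hai : a ≠ i) (haj : a ≠ j) (hbi : b ≠ i) (hbj : b ≠ j)
    (hζ : ζ ^ r = 1) (hlam : lam ^ r = 1) (hc : c ^ r = 1)
    (hPi : ¬ X ≤ coordH ℓ i) (hPj : ¬ X ≤ coordH ℓ j)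
    (hPa : ¬ X ≤ coordH ℓ a) (hPb : ¬ X ≤ coordH ℓ b)
    (hXij : X ≤ diffH ℓ i j ζ) (hXab : X ≤ diffH ℓ a b lam)
    (hNia : ¬ X ≤ diffH ℓ i a c) (hNjb : ¬ X ≤ diffH ℓ j b (c * lam * ζ⁻¹)) : False := by
  have hζ0 : ζ ≠ 0 := root_ne_zero hr hζ
  have hlam0 : lam ≠ 0 := root_ne_zero hr hlam
  have hc0 : c ≠ 0 := root_ne_zero hr hc
  set d : ℂ := c * lam * ζ⁻¹ with hddef
  have hdroot : d ^ r = 1 := root_mul (root_mul hc hlam) (root_inv hζ)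
  have hd0 : d ≠ 0 := root_ne_zero hr hdroot
  have hdeq : ζ * d = c * lam := by rw [hddef]; field_simp
  set Y := diffH ℓ i a c ⊓ diffH ℓ j b d with hYdef
  have hYlat : Y ∈ ArrLatIn ⊤ (interArr r ℓ k) :=
    inf_two_mem_lat (diffH_mem_arr (Ne.symm hai) hc hr) (diffH_mem_arr (Ne.symm hbj) hdroot hr)
  set v1 : Fin ℓ → ℂ := fun s => if s = i then c else if s = a then 1 else 0 with hv1def
  set v2 : Fin ℓ → ℂ := fun s => if s = j then d else if s = b then 1 else 0 with hv2def
  have hv1_i : v1 i = c := by simp [hv1def, Ne.symm hai]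
  have hv1_j : v1 j = 0 := by simp [hv1def, Ne.symm hij, Ne.symm haj]
  have hv1_a : v1 a = 1 := by simp [hv1def, hai]
  have hv1_b : v1 b = 0 := by simp [hv1def, hbi, Ne.symm hab]
  have hv2_i : v2 i = 0 := by simp [hv2def, hij, Ne.symm hbi]
  have hv2_j : v2 j = d := by simp [hv2def]
  have hv2_a : v2 a = 0 := by simp [hv2def, haj, hab]
  have hv2_b : v2 b = 1 := by simp [hv2def, hbj]
  have hv1Y : v1 ∈ Y := by
    refine Submodule.mem_inf.2 ⟨mem_diffH.2 ?_, mem_diffH.2 ?_⟩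
    · rw [hv1_i, hv1_a, mul_one]
    · rw [hv1_j, hv1_b, mul_zero]
  have hv2Y : v2 ∈ Y := by
    refine Submodule.mem_inf.2 ⟨mem_diffH.2 ?_, mem_diffH.2 ?_⟩
    · rw [hv2_i, hv2_a, mul_zero]
    · rw [hv2_j, hv2_b, mul_one]
  have hmemY : ∀ w : Fin ℓ, i ≠ w → j ≠ w → a ≠ w → b ≠ w → Pi.single w (1:ℂ) ∈ Y :=
    fun w h1 h2 h3 h4 => Submodule.mem_inf.2 ⟨single_mem_diffH h1 h3, single_mem_diffH h2 h4⟩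
  set K := LinearMap.ker (lin4 1 (-ζ) (-c) (c*lam) i j a b) with hKdef
  have hXK : X ≤ K := by
    intro x hx
    have e1 := mem_diffH.1 (hXij hx)
    have e2 := mem_diffH.1 (hXab hx)
    rw [hKdef, mem_ker_lin4]
    linear_combination e1 - c * e2
  have hYK : Y ≤ K := by
    intro x hx
    obtain ⟨h1, h2⟩ := Submodule.mem_inf.1 hx
    rw [mem_diffH] at h1 h2
    rw [hKdef, mem_ker_lin4]
    linear_combination h1 - ζ * h2 - (x b) * hdeq
  have hKne : K ≠ ⊤ := by
    apply ne_top_of_notmem (x := Pi.single i 1)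
    rw [hKdef, mem_ker_lin4]
    simp [Pi.single_apply, hij.symm, hai, hbi]
  have hcom : ∀ H ∈ interArr r ℓ k, X ≤ H → Y ≤ H → False := by
    intro H hH hXH hYH
    obtain ⟨t, htk, rfl⟩ | ⟨p, q, hpq, ν, hν, rfl⟩ := hH
    · by_cases hti : t = i
      · subst hti; exact hc0 (by rw [← hv1_i]; exact mem_coordH.1 (hYH hv1Y))
      by_cases hta : t = a
      · subst hta; exact one_ne_zero (α := ℂ) (by rw [← hv1_a]; exact mem_coordH.1 (hYH hv1Y))
      by_cases htj : t = j
      · subst htj; exact hd0 (by rw [← hv2_j]; exact mem_coordH.1 (hYH hv2Y))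
      by_cases htb : t = b
      · subst htb; exact one_ne_zero (α := ℂ) (by rw [← hv2_b]; exact mem_coordH.1 (hYH hv2Y))
      · exact single_not_mem_coordH
          (hYH (hmemY t (Ne.symm hti) (Ne.symm htj) (Ne.symm hta) (Ne.symm htb)))
    · have hpq' : p ≠ q := Fin.ne_of_lt hpq
      have hν0 : ν ≠ 0 := root_ne_zero hr hν
      have hp : p = i ∨ p = j ∨ p = a ∨ p = b := by
        by_contra h; push_neg at h
        exact single_not_mem_diffH_left hpq' hν hr
          (hYH (hmemY p (Ne.symm h.1) (Ne.symm h.2.1) (Ne.symm h.2.2.1) (Ne.symm h.2.2.2)))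
      have hq : q = i ∨ q = j ∨ q = a ∨ q = b := by
        by_contra h; push_neg at h
        exact single_not_mem_diffH_right hpq' hν hr
          (hYH (hmemY q (Ne.symm h.1) (Ne.symm h.2.1) (Ne.symm h.2.2.1) (Ne.symm h.2.2.2)))
      have hrel1 := mem_diffH.1 (hYH hv1Y)
      have hrel2 := mem_diffH.1 (hYH hv2Y)
      rcases hp with rfl | rfl | rfl | rfl <;> rcases hq with rfl | rfl | rfl | rfl
      · exact hpq' rfl
      · -- (i,j)
        rw [hv1_i, hv1_j, mul_zero] at hrel1; exact hc0 hrel1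
      · -- (i,a)
        rw [hv1_i, hv1_a, mul_one] at hrel1
        exact hNia (hrel1 ▸ hXH)
      · -- (i,b)
        rw [hv1_i, hv1_b, mul_zero] at hrel1; exact hc0 hrel1
      · -- (j,i)
        rw [hv2_j, hv2_i, mul_zero] at hrel2; exact hd0 hrel2
      · exact hpq' rfl
      · -- (j,a)
        rw [hv2_j, hv2_a, mul_zero] at hrel2; exact hd0 hrel2
      · -- (j,b)
        rw [hv2_j, hv2_b, mul_one] at hrel2
        exact hNjb (hrel2 ▸ hXH)
      · -- (a,i)
        rw [hv1_a, hv1_i] at hrel1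
        have hflip := le_diffH_flip hν0 hXH
        have hceq : ν⁻¹ = c := by
          field_simp
          linear_combination hrel1
        exact hNia (hceq ▸ hflip)
      · -- (a,j)
        rw [hv1_a, hv1_j, mul_zero] at hrel1; exact one_ne_zero hrel1
      · exact hpq' rfl
      · -- (a,b)
        rw [hv1_a, hv1_b, mul_zero] at hrel1; exact one_ne_zero hrel1
      · -- (b,i)
        rw [hv2_b, hv2_i, mul_zero] at hrel2; exact one_ne_zero hrel2
      · -- (b,j)
        rw [hv2_b, hv2_j] at hrel2
        have hflip := le_diffH_flip hν0 hXH
        have hceq : ν⁻¹ = d := by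
          field_simp
          linear_combination hrel2
        exact hNjb (hceq ▸ hflip)
      · -- (b,a)
        rw [hv2_b, hv2_a, mul_zero] at hrel2; exact one_ne_zero hrel2
      · exact hpq' rfl
  exact nonmod hcom hXK hYK hKne (hmod.2 Y hYlat)

lemma caseIIc (hr : 2 ≤ r) {X : Submodule ℂ (Fin ℓ → ℂ)}
    (hmod : ModularIn (ArrLatIn ⊤ (interArr r ℓ k)) X)
    {i j a b : Fin ℓ} {ζ lam : ℂ}
    (hij : i ≠ j) (hab : a ≠ b) (hai : a ≠ i) (haj : a ≠ j) (hbi : b ≠ i) (hbj : b ≠ j)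
    (hζ : ζ ^ r = 1) (hlam : lam ^ r = 1)
    (hPi : ¬ X ≤ coordH ℓ i) (hPj : ¬ X ≤ coordH ℓ j)
    (hPa : ¬ X ≤ coordH ℓ a) (hPb : ¬ X ≤ coordH ℓ b)
    (hXij : X ≤ diffH ℓ i j ζ) (hXab : X ≤ diffH ℓ a b lam) : False := by
  have hζ0 : ζ ≠ 0 := root_ne_zero hr hζ
  have hlam0 : lam ≠ 0 := root_ne_zero hr hlam
  have hz0 : zeta0 r ≠ 0 := zeta0_ne_zero hr
  by_cases h1 : X ≤ diffH ℓ i a 1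
  · refine caseIIc_core hr hmod hij hab hai haj hbi hbj hζ hlam (zeta0_pow hr)
      hPi hPj hPa hPb hXij hXab ?_ ?_
    · intro h
      exact zeta0_ne_one hr (rel_uniq h h1 hPa)
    · intro h
      have k1 : X ≤ diffH ℓ i b (ζ * (zeta0 r * lam * ζ⁻¹)) := le_diffH_trans hXij h
      have k2 : X ≤ diffH ℓ i b (1 * lam) := le_diffH_trans h1 hXab
      have := rel_uniq k1 k2 hPb
      apply zeta0_ne_one hr
      field_simp at this
      first
      | exact this
      | exact this.symm
      | linear_combination lam⁻¹ * this
      | linear_combination this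
  · by_cases h2 : X ≤ diffH ℓ j b (1 * lam * ζ⁻¹)
    · refine caseIIc_core hr hmod hij hab hai haj hbi hbj hζ hlam (zeta0_pow hr)
        hPi hPj hPa hPb hXij hXab ?_ ?_
      · intro h
        have k1 : X ≤ diffH ℓ i b (zeta0 r * lam) := le_diffH_trans h hXab
        have k2 : X ≤ diffH ℓ i b (ζ * (1 * lam * ζ⁻¹)) := le_diffH_trans hXij h2
        have := rel_uniq k1 k2 hPb
        apply zeta0_ne_one hr
        field_simp at this
        first
        | exact this
        | exact this.symm
        | linear_combination lam⁻¹ * this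
        | linear_combination this
      · intro h
        have := rel_uniq h h2 hPb
        apply zeta0_ne_one hr
        field_simp at this
        first
        | exact this
        | exact this.symm
        | linear_combination (ζ * lam⁻¹) * this
        | linear_combination this
    · exact caseIIc_core hr hmod hij hab hai haj hbi hbj hζ hlam (one_pow r)
        hPi hPj hPa hPb hXij hXab h1 h2
end Forward2

section Forward3

variable {r ℓ k : ℕ}

lemma caseIIb4 (hr : 2 ≤ r) {X : Submodule ℂ (Fin ℓ → ℂ)}
    (hmod : ModularIn (ArrLatIn ⊤ (interArr r ℓ k)) X)
    {i j m u : Fin ℓ} {ζ η : ℂ}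
    (hij : i ≠ j) (hmi : m ≠ i) (hmj : m ≠ j) (hui : u ≠ i) (huj : u ≠ j) (hum : u ≠ m)
    (hζ : ζ ^ r = 1) (hη : η ^ r = 1)
    (hP : ∀ s, ¬ X ≤ coordH ℓ s)
    (hXij : X ≤ diffH ℓ i j ζ) (hXmi : X ≤ diffH ℓ m i η)
    (hnd : ∀ (a b : Fin ℓ) (lam : ℂ), a ≠ b → a ≠ i → a ≠ j → b ≠ i → b ≠ j →
      lam ^ r = 1 → ¬ X ≤ diffH ℓ a b lam) : False := by
  have hζ0 : ζ ≠ 0 := root_ne_zero hr hζ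
  have hη0 : η ≠ 0 := root_ne_zero hr hη
  set c : ℂ := zeta0 r * ζ with hcdef
  have hcroot : c ^ r = 1 := root_mul (zeta0_pow hr) hζ
  have hc0 : c ≠ 0 := root_ne_zero hr hcroot
  have hcζ : c ≠ ζ := by
    intro h
    exact zeta0_ne_one hr (by rw [hcdef] at h; exact mul_right_cancel₀ hζ0 (h.trans (one_mul ζ).symm))
  set Y := diffH ℓ i j c ⊓ diffH ℓ m u 1 ⊓ diffH ℓ m u (zeta0 r) with hYdef
  have hYlat : Y ∈ ArrLatIn ⊤ (interArr r ℓ k) :=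
    inf_three_mem_lat (diffH_mem_arr hij hcroot hr) (diffH_mem_arr hum.symm (one_pow r) hr)
      (diffH_mem_arr hum.symm (zeta0_pow hr) hr)
  have hYchar : ∀ x ∈ Y, x i = c * x j ∧ x m = 0 ∧ x u = 0 := by
    intro x hx
    obtain ⟨⟨h1, h2⟩, h3⟩ := Submodule.mem_inf.1 hx |>.imp Submodule.mem_inf.1 id
    rw [mem_diffH] at h1 h2 h3
    have h4 : (1 - zeta0 r) * x u = 0 := by linear_combination h3 - h2
    have hu0 : x u = 0 := by
      rcases mul_eq_zero.1 h4 with h | h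
      · exact absurd (by linear_combination -h : zeta0 r = 1) (zeta0_ne_one hr)
      · exact h
    exact ⟨h1, by rw [h2, hu0, mul_zero], hu0⟩
  set v : Fin ℓ → ℂ := fun s => if s = i then c else if s = j then 1 else 0 with hvdef
  have hv_i : v i = c := by simp [hvdef]
  have hv_j : v j = 1 := by simp [hvdef, Ne.symm hij]
  have hv_m : v m = 0 := by simp [hvdef, hmi, hmj]
  have hv_u : v u = 0 := by simp [hvdef, hui, huj]
  have hvY : v ∈ Y := by
    refine Submodule.mem_inf.2 ⟨Submodule.mem_inf.2 ⟨mem_diffH.2 ?_, mem_diffH.2 ?_⟩, mem_diffH.2 ?_⟩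
    · rw [hv_i, hv_j, mul_one]
    · rw [hv_m, hv_u, mul_zero]
    · rw [hv_m, hv_u, mul_zero]
  have hmemY : ∀ w : Fin ℓ, i ≠ w → j ≠ w → m ≠ w → u ≠ w → Pi.single w (1:ℂ) ∈ Y :=
    fun w h1 h2 h3 h4 => Submodule.mem_inf.2 ⟨Submodule.mem_inf.2
      ⟨single_mem_diffH h1 h2, single_mem_diffH h3 h4⟩, single_mem_diffH h3 h4⟩
  set K := LinearMap.ker (lin4 (η*ζ) (-(η*ζ*c)) (-(ζ - c)) 0 i j m m) with hKdef
  have hXK : X ≤ K := by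
    intro x hx
    have e1 := mem_diffH.1 (hXij hx)
    have e2 := mem_diffH.1 (hXmi hx)
    rw [hKdef, mem_ker_lin4]
    linear_combination (η*c) * e1 - (ζ - c) * e2
  have hYK : Y ≤ K := by
    intro x hx
    obtain ⟨hy1, hm0, hu0⟩ := hYchar x hx
    rw [hKdef, mem_ker_lin4]
    linear_combination (η*ζ) * hy1 - (ζ - c) * hm0
  have hKne : K ≠ ⊤ := by
    apply ne_top_of_notmem (x := Pi.single i 1)
    rw [hKdef, mem_ker_lin4]
    simp [Pi.single_apply, hij.symm, hmi.symm]
    exact ⟨hη0, hζ0⟩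
  have hcom : ∀ H ∈ interArr r ℓ k, X ≤ H → Y ≤ H → False := by
    intro H hH hXH hYH
    obtain ⟨t, htk, rfl⟩ | ⟨p, q, hpq, ν, hν, rfl⟩ := hH
    · exact hP t hXH
    · have hpq' : p ≠ q := Fin.ne_of_lt hpq
      have hν0 : ν ≠ 0 := root_ne_zero hr hν
      have hp : p = i ∨ p = j ∨ p = m ∨ p = u := by
        by_contra h; push_neg at h
        exact single_not_mem_diffH_left hpq' hν hr
          (hYH (hmemY p (Ne.symm h.1) (Ne.symm h.2.1) (Ne.symm h.2.2.1) (Ne.symm h.2.2.2)))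
      have hq : q = i ∨ q = j ∨ q = m ∨ q = u := by
        by_contra h; push_neg at h
        exact single_not_mem_diffH_right hpq' hν hr
          (hYH (hmemY q (Ne.symm h.1) (Ne.symm h.2.1) (Ne.symm h.2.2.1) (Ne.symm h.2.2.2)))
      have hrel := mem_diffH.1 (hYH hvY)
      have hPj' := hP j
      have hnd1 : ∀ ν' : ℂ, ν' ^ r = 1 → ¬ X ≤ diffH ℓ m u ν' :=
        fun ν' h' => hnd m u ν' hum.symm hmi hmj hui huj h'
      have hnd2 : ∀ ν' : ℂ, ν' ^ r = 1 → ¬ X ≤ diffH ℓ u m ν' :=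
        fun ν' h' => hnd u m ν' hum hui huj hmi hmj h'
      rcases hp with rfl | rfl | rfl | rfl <;> rcases hq with rfl | rfl | rfl | rfl
      · exact hpq' rfl
      · -- (i,j)
        rw [hv_i, hv_j, mul_one] at hrel
        rw [← hrel] at hXH
        exact hcζ (rel_uniq hXH hXij hPj')
      · rw [hv_i, hv_m, mul_zero] at hrel; exact hc0 hrel
      · rw [hv_i, hv_u, mul_zero] at hrel; exact hc0 hrel
      · -- (j,i)
        rw [hv_j, hv_i] at hrel
        have hself := le_diffH_trans hXH hXij
        have hνζ : ν * ζ = 1 := rel_self hself hPj'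
        have hνc : ν * c = 1 := hrel.symm
        exact hcζ (mul_left_cancel₀ hν0 (hνc.trans hνζ.symm))
      · exact hpq' rfl
      · rw [hv_j, hv_m, mul_zero] at hrel; exact one_ne_zero hrel
      · rw [hv_j, hv_u, mul_zero] at hrel; exact one_ne_zero hrel
      · rw [hv_m, hv_i] at hrel
        exact (mul_ne_zero hν0 hc0) hrel.symm
      · rw [hv_m, hv_j, mul_one] at hrel; exact hν0 hrel.symm
      · exact hpq' rfl
      · -- (m,u)
        exact hnd1 ν hν hXH
      · rw [hv_u, hv_i] at hrel; exact (mul_ne_zero hν0 hc0) hrel.symm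
      · rw [hv_u, hv_j, mul_one] at hrel; exact hν0 hrel.symm
      · -- (u,m)
        exact hnd2 ν hν hXH
      · exact hpq' rfl
  exact nonmod hcom hXK hYK hKne (hmod.2 Y hYlat)

end Forward3

section Forward4

variable {r ℓ k : ℕ}

lemma caseIIbk (hr : 2 ≤ r) {X : Submodule ℂ (Fin ℓ → ℂ)}
    (hmod : ModularIn (ArrLatIn ⊤ (interArr r ℓ k)) X)
    {t u₁ u₂ : Fin ℓ} {τ w : ℂ}
    (htu1 : t ≠ u₁) (htu2 : t ≠ u₂) (hu12 : u₁ ≠ u₂)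
    (htk : (t : ℕ) < k) (hτ : τ ^ r = 1) (hw : w ^ r = 1)
    (hP : ∀ s, ¬ X ≤ coordH ℓ s)
    (hXt : X ≤ diffH ℓ t u₁ τ) (hXu : X ≤ diffH ℓ u₁ u₂ w) : False := by
  have hτ0 : τ ≠ 0 := root_ne_zero hr hτ
  have hw0 : w ≠ 0 := root_ne_zero hr hw
  have hz0 : zeta0 r ≠ 0 := zeta0_ne_zero hr
  have hzw : (zeta0 r * w) ^ r = 1 := root_mul (zeta0_pow hr) hw
  have hzw0 : zeta0 r * w ≠ 0 := mul_ne_zero hz0 hw0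
  set Y := coordH ℓ t ⊓ diffH ℓ u₁ u₂ (zeta0 r * w) with hYdef
  have hYlat : Y ∈ ArrLatIn ⊤ (interArr r ℓ k) :=
    inf_two_mem_lat (Or.inl ⟨t, htk, rfl⟩) (diffH_mem_arr hu12 hzw hr)
  set v : Fin ℓ → ℂ := fun s => if s = u₁ then zeta0 r * w else if s = u₂ then 1 else 0 with hvdef
  have hv_t : v t = 0 := by simp [hvdef, htu1, htu2]
  have hv_1 : v u₁ = zeta0 r * w := by simp [hvdef]
  have hv_2 : v u₂ = 1 := by simp [hvdef, Ne.symm hu12]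
  have hvY : v ∈ Y := by
    refine Submodule.mem_inf.2 ⟨mem_coordH.2 hv_t, mem_diffH.2 ?_⟩
    rw [hv_1, hv_2, mul_one]
  have hmemY : ∀ s : Fin ℓ, t ≠ s → u₁ ≠ s → u₂ ≠ s → Pi.single s (1:ℂ) ∈ Y := by
    intro s h1 h2 h3
    refine Submodule.mem_inf.2 ⟨mem_coordH.2 ?_, single_mem_diffH h2 h3⟩
    simp [Pi.single_apply, Ne.symm h1]
  set K := LinearMap.ker (lin4 (zeta0 r - 1) τ (-(τ * zeta0 r * w)) 0 t u₁ u₂ u₂) with hKdef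
  have hXK : X ≤ K := by
    intro x hx
    have e1 := mem_diffH.1 (hXt hx)
    have e2 := mem_diffH.1 (hXu hx)
    rw [hKdef, mem_ker_lin4]
    linear_combination (zeta0 r - 1) * e1 + zeta0 r * τ * e2
  have hYK : Y ≤ K := by
    intro x hx
    obtain ⟨h1, h2⟩ := Submodule.mem_inf.1 hx
    rw [mem_coordH] at h1; rw [mem_diffH] at h2
    rw [hKdef, mem_ker_lin4]
    linear_combination (zeta0 r - 1) * h1 + τ * h2
  have hKne : K ≠ ⊤ := by
    apply ne_top_of_notmem (x := Pi.single t 1)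
    rw [hKdef, mem_ker_lin4]
    simp [Pi.single_apply, htu1.symm, htu2.symm]
    exact sub_ne_zero_of_ne (zeta0_ne_one hr)
  have hcom : ∀ H ∈ interArr r ℓ k, X ≤ H → Y ≤ H → False := by
    intro H hH hXH hYH
    obtain ⟨c, hck, rfl⟩ | ⟨p, q, hpq, ν, hν, rfl⟩ := hH
    · exact hP c hXH
    · have hpq' : p ≠ q := Fin.ne_of_lt hpq
      have hν0 : ν ≠ 0 := root_ne_zero hr hν
      have hp : p = t ∨ p = u₁ ∨ p = u₂ := by
        by_contra h; push_neg at h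
        exact single_not_mem_diffH_left hpq' hν hr
          (hYH (hmemY p (Ne.symm h.1) (Ne.symm h.2.1) (Ne.symm h.2.2)))
      have hq : q = t ∨ q = u₁ ∨ q = u₂ := by
        by_contra h; push_neg at h
        exact single_not_mem_diffH_right hpq' hν hr
          (hYH (hmemY q (Ne.symm h.1) (Ne.symm h.2.1) (Ne.symm h.2.2)))
      have hrel := mem_diffH.1 (hYH hvY)
      have hPu2' := hP u₂
      have hXu' := hXu
      rcases hp with rfl | rfl | rfl <;> rcases hq with rfl | rfl | rfl
      · exact hpq' rfl
      · rw [hv_t, hv_1] at hrel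
        exact (mul_ne_zero hν0 hzw0) hrel.symm
      · rw [hv_t, hv_2, mul_one] at hrel
        exact hν0 hrel.symm
      · rw [hv_1, hv_t, mul_zero] at hrel
        exact hzw0 hrel
      · exact hpq' rfl
      · -- (u₁, u₂)
        rw [hv_1, hv_2, mul_one] at hrel
        rw [← hrel] at hXH
        have huniq := rel_uniq hXH hXu' hPu2'
        exact (zeta0_ne_one hr) (mul_right_cancel₀ hw0 (huniq.trans (one_mul w).symm))
      · rw [hv_2, hv_t, mul_zero] at hrel
        exact one_ne_zero hrel
      · -- (u₂, u₁)
        rw [hv_2, hv_1] at hrel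
        have hself := le_diffH_trans hXu' hXH
        have hwv : w * ν = 1 := rel_self hself (hP _)
        have hvzw : ν * (zeta0 r * w) = 1 := hrel.symm
        have : zeta0 r = 1 := by
          have h1 : ν * w * zeta0 r = 1 := by linear_combination hvzw
          have h2 : ν * w * 1 = 1 := by linear_combination hwv
          exact mul_left_cancel₀ (by intro h; rw [h, zero_mul] at h2; exact one_ne_zero h2.symm) (h1.trans h2.symm)
        exact zeta0_ne_one hr this
      · exact hpq' rfl
  exact nonmod hcom hXK hYK hKne (hmod.2 Y hYlat)

lemma caseIIbr3 (hr3 : 3 ≤ r) {X : Submodule ℂ (Fin ℓ → ℂ)}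
    (hmod : ModularIn (ArrLatIn ⊤ (interArr r ℓ k)) X)
    {i j m : Fin ℓ} {ζ η : ℂ}
    (hij : i ≠ j) (hmi : m ≠ i) (hmj : m ≠ j)
    (hζ : ζ ^ r = 1) (hη : η ^ r = 1)
    (hP : ∀ s, ¬ X ≤ coordH ℓ s)
    (hXij : X ≤ diffH ℓ i j ζ) (hXmi : X ≤ diffH ℓ m i η) : False := by
  have hr : 2 ≤ r := by omega
  have hζ0 : ζ ≠ 0 := root_ne_zero hr hζ
  have hη0 : η ≠ 0 := root_ne_zero hr hη
  have hz0 : zeta0 r ≠ 0 := zeta0_ne_zero hr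
  have hprim := Complex.isPrimitiveRoot_exp r (by omega : r ≠ 0)
  have hz2 : (zeta0 r) ^ 2 ≠ 1 := by
    intro h
    have := hprim.pow_inj (by omega : 2 < r) (by omega : 0 < r)
      (by show (zeta0 r)^2 = (zeta0 r)^0; rw [h, pow_zero])
    omega
  have hz2z : (zeta0 r) ^ 2 ≠ zeta0 r := by
    intro h
    have := hprim.pow_inj (by omega : 2 < r) (by omega : 1 < r)
      (by show (zeta0 r)^2 = (zeta0 r)^1; rw [h, pow_one])
    omega
  set a : ℂ := zeta0 r * ζ with hadef
  set b : ℂ := (zeta0 r) ^ 2 * η⁻¹ with hbdef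
  have haroot : a ^ r = 1 := root_mul (zeta0_pow hr) hζ
  have hbroot : b ^ r = 1 := by
    rw [hbdef]
    refine root_mul ?_ (root_inv hη)
    rw [← pow_mul, mul_comm, pow_mul, zeta0_pow hr, one_pow]
  have ha0 : a ≠ 0 := root_ne_zero hr haroot
  have hb0 : b ≠ 0 := root_ne_zero hr hbroot
  have haζ : a ≠ ζ := by
    intro h
    exact zeta0_ne_one hr (by rw [hadef] at h; exact mul_right_cancel₀ hζ0 (h.trans (one_mul ζ).symm))
  have hb2 : b * η = (zeta0 r) ^ 2 := by
    rw [hbdef]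
    field_simp
  have hbη : b * η ≠ 1 := by rw [hb2]; exact hz2
  have hb3 : b * ζ * η = (zeta0 r) ^ 2 * ζ := by
    rw [hbdef]
    field_simp
  have hbza : b * ζ * η ≠ a := by
    rw [hb3, hadef]
    intro h
    exact hz2z (mul_right_cancel₀ hζ0 h)
  set Y := diffH ℓ i j a ⊓ diffH ℓ i m b with hYdef
  have hYlat : Y ∈ ArrLatIn ⊤ (interArr r ℓ k) :=
    inf_two_mem_lat (diffH_mem_arr hij haroot hr) (diffH_mem_arr (Ne.symm hmi) hbroot hr)
  set v : Fin ℓ → ℂ := fun s => if s = i then a * b else if s = j then b else if s = m then a else 0 with hvdef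
  have hv_i : v i = a * b := by simp [hvdef]
  have hv_j : v j = b := by simp [hvdef, Ne.symm hij]
  have hv_m : v m = a := by simp [hvdef, hmi, hmj]
  have hvY : v ∈ Y := by
    refine Submodule.mem_inf.2 ⟨mem_diffH.2 ?_, mem_diffH.2 ?_⟩
    · rw [hv_i, hv_j]
    · rw [hv_i, hv_m]; ring
  have hmemY : ∀ s : Fin ℓ, i ≠ s → j ≠ s → m ≠ s → Pi.single s (1:ℂ) ∈ Y :=
    fun s h1 h2 h3 => Submodule.mem_inf.2 ⟨single_mem_diffH h1 h2, single_mem_diffH h1 h3⟩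
  set K := LinearMap.ker (lin4 (a - b*η*ζ) (-(a*ζ*(1-b*η))) (-((a-ζ)*b)) 0 i j m m) with hKdef
  have hXK : X ≤ K := by
    intro x hx
    have e1 := mem_diffH.1 (hXij hx)
    have e2 := mem_diffH.1 (hXmi hx)
    rw [hKdef, mem_ker_lin4]
    linear_combination (a*(1 - b*η)) * e1 + (-((a-ζ)*b)) * e2
  have hYK : Y ≤ K := by
    intro x hx
    obtain ⟨h1, h2⟩ := Submodule.mem_inf.1 hx
    rw [mem_diffH] at h1 h2
    rw [hKdef, mem_ker_lin4]
    linear_combination (ζ*(1 - b*η)) * h1 + (a - ζ) * h2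
  have hKne : K ≠ ⊤ := by
    apply ne_top_of_notmem (x := (Pi.single j 1 : Fin ℓ → ℂ))
    rw [hKdef, mem_ker_lin4]
    intro hmem
    have s1 : (Pi.single j 1 : Fin ℓ → ℂ) i = 0 := by simp [Pi.single_apply, hij.symm]
    have s2 : (Pi.single j 1 : Fin ℓ → ℂ) j = 1 := by simp
    have s3 : (Pi.single j 1 : Fin ℓ → ℂ) m = 0 := by simp [Pi.single_apply, hmj]
    rw [s1, s2, s3] at hmem
    have hz : a * ζ * (1 - b * η) = 0 := by linear_combination -hmem
    rcases mul_eq_zero.1 hz with h | h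
    · rcases mul_eq_zero.1 h with h' | h'
      · exact ha0 h'
      · exact hζ0 h'
    · exact hbη (by linear_combination -h)
  have hcom : ∀ H ∈ interArr r ℓ k, X ≤ H → Y ≤ H → False := by
    intro H hH hXH hYH
    obtain ⟨c, hck, rfl⟩ | ⟨p, q, hpq, ν, hν, rfl⟩ := hH
    · exact hP c hXH
    · have hpq' : p ≠ q := Fin.ne_of_lt hpq
      have hν0 : ν ≠ 0 := root_ne_zero hr hν
      have hp : p = i ∨ p = j ∨ p = m := by
        by_contra h; push_neg at h
        exact single_not_mem_diffH_left hpq' hν hr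
          (hYH (hmemY p (Ne.symm h.1) (Ne.symm h.2.1) (Ne.symm h.2.2)))
      have hq : q = i ∨ q = j ∨ q = m := by
        by_contra h; push_neg at h
        exact single_not_mem_diffH_right hpq' hν hr
          (hYH (hmemY q (Ne.symm h.1) (Ne.symm h.2.1) (Ne.symm h.2.2)))
      have hrel := mem_diffH.1 (hYH hvY)
      have hPi' := hP i
      have hPj' := hP j
      have hPm' := hP m
      have hXij' := hXij
      have hXmi' := hXmi
      have hXmj' : X ≤ diffH ℓ m j (η * ζ) := le_diffH_trans hXmi hXij
      rcases hp with rfl | rfl | rfl <;> rcases hq with rfl | rfl | rfl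
      · exact hpq' rfl
      · -- (i,j) : ν = a
        rw [hv_i, hv_j] at hrel
        have hνa : ν = a := mul_right_cancel₀ hb0 hrel.symm
        rw [hνa] at hXH
        exact haζ (rel_uniq hXH hXij' hPj')
      · -- (i,m) : ν = b
        rw [hv_i, hv_m] at hrel
        have hνb : ν = b := by
          have : a * b = a * ν := by linear_combination hrel
          exact (mul_left_cancel₀ ha0 this).symm
        rw [hνb] at hXH
        have hself := le_diffH_trans hXH hXmi'
        exact hbη (rel_self hself hPi')
      · -- (j,i) : ν * a = 1
        rw [hv_j, hv_i] at hrel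
        have hself := le_diffH_trans hXH hXij'
        have hνζ : ν * ζ = 1 := rel_self hself hPj'
        have hνa : ν * a = 1 := by
          have : b * 1 = b * (ν * a) := by linear_combination hrel
          exact (mul_left_cancel₀ hb0 this).symm
        exact haζ (mul_left_cancel₀ hν0 (hνa.trans hνζ.symm))
      · exact hpq' rfl
      · -- (j,m)
        rw [hv_j, hv_m] at hrel
        have him := le_diffH_trans hXij' hXH
        have hself := le_diffH_trans him hXmi'
        have hζνη : ζ * ν * η = 1 := rel_self hself hPi'
        apply hbza
        -- b = ν * a and ζνη = 1 imply b ζ η = a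
        have h1 : b * ζ * η = ν * a * ζ * η := by linear_combination (ζ * η) * hrel
        rw [h1]
        have h2 : ν * a * ζ * η = a * (ζ * ν * η) := by ring
        rw [h2, hζνη, mul_one]
      · -- (m,i) : ν = η
        rw [hv_m, hv_i] at hrel
        have hmjν := le_diffH_trans hXH hXij'
        have hνη : ν * ζ = η * ζ := rel_uniq hmjν hXmj' hPj'
        have hνη' : ν = η := mul_right_cancel₀ hζ0 hνη
        rw [hνη'] at hrel
        -- a = η * (a * b)
        apply hbη
        have : a * 1 = a * (b * η) := by linear_combination hrel
        exact (mul_left_cancel₀ ha0 this).symm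
      · -- (m,j) : ν = η ζ
        rw [hv_m, hv_j] at hrel
        have hνηζ : ν = η * ζ := rel_uniq hXH hXmj' hPj'
        rw [hνηζ] at hrel
        exact hbza (by linear_combination -hrel)
      · exact hpq' rfl
  exact nonmod hcom hXK hYK hKne (hmod.2 Y hYlat)

end Forward4

section Assembly

variable {r ℓ k : ℕ}

lemma forward (hr : 2 ≤ r) (hℓ : 3 ≤ ℓ) (hk : k ≤ ℓ) (hexc : ¬(k = 0 ∧ ℓ = 3 ∧ r = 2))
    {X : Submodule ℂ (Fin ℓ → ℂ)} (hX : X ∈ ArrLatIn ⊤ (interArr r ℓ k))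
    (hmod : ModularIn (ArrLatIn ⊤ (interArr r ℓ k)) X) :
    X ∈ ArrLatIn ⊤ (boolArr ℓ k) ∨ X ∈ interArr r ℓ k ∨ X = ⊥ ∨ X = ⊤ := by
  by_cases hrel : ∃ i j : Fin ℓ, ∃ ζ : ℂ, i ≠ j ∧ ζ ^ r = 1 ∧ ¬X ≤ coordH ℓ i ∧
      ¬X ≤ coordH ℓ j ∧ X ≤ diffH ℓ i j ζ
  · -- there is a relation
    obtain ⟨i, j, ζ, hij, hζ, hPi, hPj, hXij⟩ := hrel
    have hζ0 : ζ ≠ 0 := root_ne_zero hr hζ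
    by_cases hZ : ∃ t, X ≤ coordH ℓ t
    · obtain ⟨t, hPt⟩ := hZ
      exact (caseIIa hr hmod hij hζ hPi hPj hXij hPt).elim
    push_neg at hZ
    by_cases hdisj : ∃ a b : Fin ℓ, ∃ lam : ℂ, a ≠ b ∧ a ≠ i ∧ a ≠ j ∧ b ≠ i ∧ b ≠ j ∧
        lam ^ r = 1 ∧ X ≤ diffH ℓ a b lam
    · obtain ⟨a, b, lam, hab, hai, haj, hbi, hbj, hlam, hXab⟩ := hdisj
      exact (caseIIc hr hmod hij hab hai haj hbi hbj hζ hlam hPi hPj (hZ a) (hZ b)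
        hXij hXab).elim
    by_cases hthird : ∃ m : Fin ℓ, ∃ η : ℂ, m ≠ i ∧ m ≠ j ∧ η ^ r = 1 ∧ X ≤ diffH ℓ m i η
    · obtain ⟨m, η, hmi, hmj, hη, hXmi⟩ := hthird
      have hη0 : η ≠ 0 := root_ne_zero hr hη
      have hnd : ∀ (a b : Fin ℓ) (lam : ℂ), a ≠ b → a ≠ i → a ≠ j → b ≠ i → b ≠ j →
          lam ^ r = 1 → ¬ X ≤ diffH ℓ a b lam :=
        fun a b lam h1 h2 h3 h4 h5 h6 h7 => hdisj ⟨a, b, lam, h1, h2, h3, h4, h5, h6, h7⟩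
      by_cases h4 : ∃ u : Fin ℓ, u ≠ i ∧ u ≠ j ∧ u ≠ m
      · obtain ⟨u, hui, huj, hum⟩ := h4
        exact (caseIIb4 hr hmod hij hmi hmj hui huj hum hζ hη hZ hXij hXmi hnd).elim
      · push_neg at h4
        have hl3 : ℓ = 3 := by
          have hsub : (Finset.univ : Finset (Fin ℓ)) ⊆ {i, j, m} := by
            intro u _
            simp only [Finset.mem_insert, Finset.mem_singleton]
            by_cases h1 : u = i
            · exact Or.inl h1
            by_cases h2 : u = j
            · exact Or.inr (Or.inl h2)
            · exact Or.inr (Or.inr (h4 u h1 h2))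
          have hcard := Finset.card_le_card hsub
          have hc3 : ({i, j, m} : Finset (Fin ℓ)).card ≤ 3 := by
            have h1 := Finset.card_insert_le i ({j, m} : Finset (Fin ℓ))
            have h2 := Finset.card_insert_le j ({m} : Finset (Fin ℓ))
            simp only [Finset.card_singleton] at h1 h2 ⊢
            omega
          rw [Finset.card_univ, Fintype.card_fin] at hcard
          omega
        have hkr : 1 ≤ k ∨ 3 ≤ r := by
          by_contra hc; push_neg at hc
          exact hexc ⟨by omega, hl3, by omega⟩
        rcases hkr with hk1 | hr3
        · have h0ℓ : 0 < ℓ := by omega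
          set t : Fin ℓ := ⟨0, h0ℓ⟩ with htdef
          have htk : (t : ℕ) < k := by
            show (0 : ℕ) < k
            omega
          by_cases hti : t = i
          · have htk' : (i : ℕ) < k := hti ▸ htk
            exact (caseIIbk hr hmod hij (Ne.symm hmi) (Ne.symm hmj) htk' hζ
              (root_inv (root_mul hη hζ)) hZ hXij
              (le_diffH_flip (mul_ne_zero hη0 hζ0) (le_diffH_trans hXmi hXij))).elim
          by_cases htj : t = j
          · have htk' : (j : ℕ) < k := htj ▸ htk
            exact (caseIIbk hr hmod (Ne.symm hij) (Ne.symm hmj) (Ne.symm hmi) htk'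
              (root_inv hζ) (root_inv hη) hZ
              (le_diffH_flip hζ0 hXij) (le_diffH_flip hη0 hXmi)).elim
          · have htm : t = m := h4 t hti htj
            have htk' : (m : ℕ) < k := htm ▸ htk
            exact (caseIIbk hr hmod hmi hmj hij htk' hη hζ hZ hXmi hXij).elim
        · exact (caseIIbr3 hr3 hmod hij hmi hmj hζ hη hZ hXij hXmi).elim
    · -- no third point: X is the hyperplane itself
      right; left
      have hXeq : X = diffH ℓ i j ζ := by
        refine le_antisymm hXij ?_
        intro v hvmem
        have hv := mem_diffH.1 hvmem
        apply decomp hr hX v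
        · intro s hs; exact absurd hs (hZ s)
        · intro s s' ν hν hs hs' hss'
          have hν0 : ν ≠ 0 := root_ne_zero hr hν
          by_cases heq : s = s'
          · subst heq
            rw [rel_self hss' hs, one_mul]
          by_cases hsi : s = i
          · subst hsi
            by_cases hsj' : s' = j
            · subst hsj'
              rw [rel_uniq hss' hXij hs']
              exact hv
            · exact absurd ⟨s', ν⁻¹, Ne.symm heq, hsj', root_inv hν,
                le_diffH_flip hν0 hss'⟩ hthird
          by_cases hsj : s = j
          · subst hsj
            by_cases hsi' : s' = i
            · subst hsi'
              have hνζ : ν * ζ = 1 := rel_self (le_diffH_trans hss' hXij) hs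
              rw [hv, ← mul_assoc, hνζ, one_mul]
            · have h1 : X ≤ diffH ℓ i s' (ζ * ν) := le_diffH_trans hXij hss'
              exact absurd ⟨s', (ζ*ν)⁻¹, hsi', Ne.symm heq, root_inv (root_mul hζ hν),
                le_diffH_flip (mul_ne_zero hζ0 hν0) h1⟩ hthird
          by_cases hsi' : s' = i
          · subst hsi'
            exact absurd ⟨s, ν, hsi, hsj, hν, hss'⟩ hthird
          by_cases hsj' : s' = j
          · subst hsj'
            have h1 : X ≤ diffH ℓ s i (ν * ζ⁻¹) :=
              le_diffH_trans hss' (le_diffH_flip hζ0 hXij)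
            exact absurd ⟨s, ν * ζ⁻¹, hsi, hsj, root_mul hν (root_inv hζ), h1⟩ hthird
          · exact absurd ⟨s, s', ν, heq, hsi, hsj, hsi', hsj', hν, hss'⟩ hdisj
      rw [hXeq]
      exact diffH_mem_arr hij hζ hr
  · -- no relation: X is an intersection of coordinate hyperplanes
    have hXchar : ∀ v : Fin ℓ → ℂ, (∀ s, X ≤ coordH ℓ s → v s = 0) → v ∈ X := by
      intro v h0
      apply decomp hr hX v h0
      intro s s' ζ hζ hs hs' hss'
      by_cases hss : s = s'
      · subst hss
        rw [rel_self hss' hs, one_mul]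
      · exact absurd ⟨s, s', ζ, hss, hζ, hs, hs', hss'⟩ hrel
    by_cases hZk : ∀ s, X ≤ coordH ℓ s → (s : ℕ) < k
    · left
      refine ⟨{H | ∃ t : Fin ℓ, X ≤ coordH ℓ t ∧ H = coordH ℓ t}, ?_, ?_⟩
      · rintro H ⟨t, hPt, rfl⟩
        exact ⟨t, hZk t hPt, rfl⟩
      · rw [top_inf_eq]
        refine le_antisymm (le_sInf ?_) ?_
        · rintro H ⟨t, hPt, rfl⟩
          exact hPt
        · intro v hv
          rw [Submodule.mem_sInf] at hv
          exact hXchar v (fun s hs => mem_coordH.1 (hv _ ⟨s, hs, rfl⟩))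
    · push_neg at hZk
      obtain ⟨j, hPj, hjk⟩ := hZk
      by_cases hall : ∀ m, X ≤ coordH ℓ m
      · right; right; left
        refine le_antisymm ?_ bot_le
        intro x hx
        rw [Submodule.mem_bot]
        funext s
        exact mem_coordH.1 (hall s hx)
      · push_neg at hall
        obtain ⟨m, hPm⟩ := hall
        exact (caseI3 hr hmod (by omega : k ≤ (j : ℕ)) hPj hPm).elim

end Assembly

/-- For `ℓ ≥ 3`, `0 ≤ k ≤ ℓ`, `r ≥ 2` with `(k,ℓ,r) ≠ (0,3,2)`, an element
`X ∈ L(A^k_ℓ(r))` is modular iff `X` lies in the lattice of the Boolean subarrangement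
`B^k_ℓ`, or `X` is a hyperplane of `A^k_ℓ(r)`, or `X ∈ {0, ℂ^ℓ}`. -/
theorem stmt_10 (r ℓ k : ℕ) (hr : 2 ≤ r) (hℓ : 3 ≤ ℓ) (hk : k ≤ ℓ)
    (hexc : ¬(k = 0 ∧ ℓ = 3 ∧ r = 2))
    (X : Submodule ℂ (Fin ℓ → ℂ)) (hX : X ∈ ArrLatIn ⊤ (interArr r ℓ k)) :
    ModularIn (ArrLatIn ⊤ (interArr r ℓ k)) X ↔
      (X ∈ ArrLatIn ⊤ (boolArr ℓ k) ∨ X ∈ interArr r ℓ k ∨ X = ⊥ ∨ X = ⊤) := by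
  constructor
  · intro hmod
    exact forward hr hℓ hk hexc hX hmod
  · rintro (hbool | hhyp | rfl | rfl)
    · obtain ⟨S₀, hS₀, rfl⟩ := hbool
      exact modular_bool hr hS₀
    · exact modular_hyper hr hhyp
    · exact modular_bot hr hℓ
    · exact modular_top
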